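/- Let (G, [·,·], α) be a Hom-Lie superalgebra with adjoint-type coboundary operators δ¹ and δ² defined by δ¹(f)(x,y) = -f([x,y]) + (-1)^{|x||f|}[x, f(y)] - (-1)^{|y|(|f|+|x|)}[y, f(x)] and δ²(f)(x,y,z) = -f([x,y], α(z)) + (-1)^{|z||y|} f([x,z], α(y)) + f(α(x), [y,z]) + (-1)^{|x||f|}[α(x), f(y,z)] - (-1)^{|y|(|f|+|x|)}[α(y), f(x,z)] + (-1)^{|z|(|f|+|x|+|y|)}[α(z), f(x,y)]. Then for every homogeneous linear map f : G → G satisfying f ∘ α = α ∘ f, one has δ² ∘ δ¹(f) = 0. -/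

import Mathlib

/-- The sign `(-1)^{ij}` for parities `i, j ∈ ℤ/2`. -/
noncomputable def m1 (i j : ZMod 2) : ℂ := (-1 : ℂ) ^ (i.val * j.val)

/-- The coboundary `δ¹(f)(x,y) = -f([x,y]) + (-1)^{|x||f|}[x,f(y)] - (-1)^{|y|(|f|+|x|)}[y,f(x)]`,
for arguments of parities `px, py` and `f` of parity `pf`. -/
noncomputable def d1 {V : Type*} [AddCommGroup V] [Module ℂ V]
    (br : V →ₗ[ℂ] V →ₗ[ℂ] V) (f : V →ₗ[ℂ] V) (pf : ZMod 2)
    (px py : ZMod 2) (a b : V) : V :=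
  -f (br a b) + m1 px pf • br a (f b) - m1 py (pf + px) • br b (f a)

private lemma zv0 : ZMod.val (0 : ZMod 2) = 0 := rfl
private lemma zv1 : ZMod.val (1 : ZMod 2) = 1 := rfl
private lemma zv2 : ZMod.val (2 : ZMod 2) = 0 := rfl
private lemma zv3 : ZMod.val (3 : ZMod 2) = 1 := rfl
private lemma zcases (i : ZMod 2) : i = 0 ∨ i = 1 := by revert i; decide

set_option maxHeartbeats 1000000 in
/-- For a Hom-Lie superalgebra `(G, [·,·], α)` and a homogeneous linear map
`f : G → G` commuting with `α`, one has `δ² (δ¹ f) = 0` on homogeneous elements. -/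
theorem stmt2 {V : Type*} [AddCommGroup V] [Module ℂ V]
    (g : ZMod 2 → Submodule ℂ V)
    (br : V →ₗ[ℂ] V →ₗ[ℂ] V) (α : V →ₗ[ℂ] V)
    (hgbr : ∀ {i j : ZMod 2} {x y : V}, x ∈ g i → y ∈ g j → br x y ∈ g (i + j))
    (hga : ∀ {i : ZMod 2} {x : V}, x ∈ g i → α x ∈ g i)
    (hskew : ∀ {i j : ZMod 2} {x y : V}, x ∈ g i → y ∈ g j →
      br x y = -(m1 i j) • br y x)
    (hjac : ∀ {i j k : ZMod 2} {x y z : V}, x ∈ g i → y ∈ g j → z ∈ g k →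
      m1 i k • br (α x) (br y z) + m1 k j • br (α z) (br x y)
        + m1 j i • br (α y) (br z x) = 0)
    (f : V →ₗ[ℂ] V) (pf : ZMod 2)
    (hf : ∀ {i : ZMod 2} {x : V}, x ∈ g i → f x ∈ g (i + pf))
    (hfα : f ∘ₗ α = α ∘ₗ f) :
    ∀ (i j k : ZMod 2) (x y z : V), x ∈ g i → y ∈ g j → z ∈ g k →
      -d1 br f pf (i + j) k (br x y) (α z)
        + m1 k j • d1 br f pf (i + k) j (br x z) (α y)
        + d1 br f pf i (j + k) (α x) (br y z)
        + m1 i pf • br (α x) (d1 br f pf j k y z)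
        - m1 j (pf + i) • br (α y) (d1 br f pf i k x z)
        + m1 k (pf + i + j) • br (α z) (d1 br f pf i j x y) = 0 := by

  intro i j k x y z hx hy hz
  have hfa : ∀ v : V, f (α v) = α (f v) := fun v => LinearMap.congr_fun hfα v
  have hxy := hgbr hx hy
  have hxz := hgbr hx hz
  have hyz := hgbr hy hz
  have hfx := hf hx
  have hfy := hf hy
  have hfz := hf hz
  have J0 := hjac hx hy hz
  rw [hskew hz hx] at J0
  have Jf := congrArg f J0
  simp only [map_add, map_smul, map_neg, map_zero, smul_neg, neg_smul, smul_smul] at Jf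
  have Jz := hjac hx hy hfz
  rw [hskew hfz hx] at Jz
  simp only [map_smul, map_neg, LinearMap.smul_apply, LinearMap.neg_apply, smul_neg, neg_smul,
    smul_smul] at Jz
  have Jy := hjac hx hfy hz
  rw [hskew hz hx] at Jy
  simp only [map_smul, map_neg, LinearMap.smul_apply, LinearMap.neg_apply, smul_neg, neg_smul,
    smul_smul] at Jy
  have Jx := hjac hfx hy hz
  rw [hskew hfx hy] at Jx
  simp only [map_smul, map_neg, LinearMap.smul_apply, LinearMap.neg_apply, smul_neg, neg_smul,
    smul_smul] at Jx
  simp only [d1, hfa]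
  rw [hskew hxy (hga hz), hskew hxz (hga hy), hskew hyz (hga hfx), hskew hxy (hga hfz),
    hskew hxz (hga hfy), hskew hz hfy]
  simp only [map_add, map_sub, map_neg, map_smul, map_zero, LinearMap.add_apply,
    LinearMap.sub_apply, LinearMap.neg_apply, LinearMap.smul_apply, smul_add, smul_sub,
    smul_neg, neg_smul, neg_neg, smul_smul]
  linear_combination (norm := (match_scalars <;> ((rcases zcases i with rfl | rfl) <;> (rcases zcases j with rfl | rfl) <;>
      (rcases zcases k with rfl | rfl) <;> (rcases zcases pf with rfl | rfl) <;>
      norm_num [m1, zv0, zv1, zv2, zv3])))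
    (-(m1 i k)) • Jf + (m1 i k * m1 j pf) • Jz + (m1 i k * m1 i pf) • Jy + (m1 (i+pf) k) • Jx
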